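/- Let μ be a permutation-invariant probability measure on ℝⁿ with respect to which all polynomials are integrable, let f be a multilinear polynomial in x₁,…,xₙ, and let i, j, k be three distinct elements of [n]. Then Inf_{ij}[f] ≤ (9/2)·(Inf_{ik}[f] + Inf_{jk}[f]). -/

import Mathlib

open MvPolynomial MeasureTheory

/-- A multilinear polynomial: every monomial is squarefree. -/
def IsMultilinear {n : ℕ} (P : MvPolynomial (Fin n) ℝ) : Prop :=
  ∀ m ∈ P.support, ∀ i, m i ≤ 1

/-- A permutation-invariant probability measure on `ℝⁿ`. -/
def PermInvariant {n : ℕ} (μ : Measure (Fin n → ℝ)) : Prop :=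
  ∀ π : Equiv.Perm (Fin n), Measure.map (fun x => x ∘ π) μ = μ

/-- The influence of the pair `(i,j)`: `Inf_{ij}[f] = ½ E_μ[(f^{(i j)} - f)²]`,
where `f^{(i j)}` is `f` with the variables `x_i` and `x_j` swapped. -/
noncomputable def pairInf {n : ℕ} (μ : Measure (Fin n → ℝ))
    (f : MvPolynomial (Fin n) ℝ) (i j : Fin n) : ℝ :=
  (1 / 2) * ∫ x, (eval x (MvPolynomial.rename (⇑(Equiv.swap i j)) f) - eval x f) ^ 2 ∂μ

variable {n : ℕ}

lemma memL2 (μ : Measure (Fin n → ℝ)) [IsProbabilityMeasure μ]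
    (hint : ∀ P : MvPolynomial (Fin n) ℝ, Integrable (fun x => eval x P) μ)
    (g : MvPolynomial (Fin n) ℝ) : MemLp (fun x => eval x g) 2 μ := by
  refine (memLp_two_iff_integrable_sq
    (MvPolynomial.continuous_eval g).aestronglyMeasurable).2 ?_
  exact (hint (g ^ 2)).congr (Filter.Eventually.of_forall fun x => by simp [MvPolynomial.eval_pow])

lemma N_inv (μ : Measure (Fin n → ℝ)) (hinv : ∀ π : Equiv.Perm (Fin n), Measure.map (fun x => x ∘ π) μ = μ)
    (g : MvPolynomial (Fin n) ℝ) (π : Equiv.Perm (Fin n)) :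
    ∫ x, (eval x (rename (⇑π) g)) ^ 2 ∂μ = ∫ x, (eval x g) ^ 2 ∂μ := by
  have hm : Measurable fun x : Fin n → ℝ => x ∘ π :=
    measurable_pi_lambda _ fun a => measurable_pi_apply _
  conv_rhs => rw [← hinv π]
  rw [integral_map hm.aemeasurable]
  · simp [eval_rename]
  · rw [hinv π]
    exact ((MvPolynomial.continuous_eval g).pow 2).aestronglyMeasurable

lemma N_eq_norm (μ : Measure (Fin n → ℝ)) [IsProbabilityMeasure μ]
    (hint : ∀ P : MvPolynomial (Fin n) ℝ, Integrable (fun x => eval x P) μ)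
    (g : MvPolynomial (Fin n) ℝ) :
    ∫ x, (eval x g) ^ 2 ∂μ = ‖(memL2 μ hint g).toLp _‖ ^ 2 := by
  rw [← real_inner_self_eq_norm_sq, MeasureTheory.L2.inner_def]
  refine (integral_congr_ae ?_).symm
  filter_upwards [(memL2 μ hint g).coeFn_toLp] with x hx
  simp [hx, RCLike.inner_apply, sq]

lemma sqrt_tri (μ : Measure (Fin n → ℝ)) [IsProbabilityMeasure μ]
    (hint : ∀ P : MvPolynomial (Fin n) ℝ, Integrable (fun x => eval x P) μ)
    (g h : MvPolynomial (Fin n) ℝ) :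
    Real.sqrt (∫ x, (eval x (g + h)) ^ 2 ∂μ) ≤
      Real.sqrt (∫ x, (eval x g) ^ 2 ∂μ) + Real.sqrt (∫ x, (eval x h) ^ 2 ∂μ) := by
  rw [N_eq_norm μ hint, N_eq_norm μ hint, N_eq_norm μ hint]
  rw [Real.sqrt_sq (norm_nonneg _), Real.sqrt_sq (norm_nonneg _), Real.sqrt_sq (norm_nonneg _)]
  have : (memL2 μ hint (g + h)).toLp _ = (memL2 μ hint g).toLp _ + (memL2 μ hint h).toLp _ := by
    rw [← MemLp.toLp_add]
    apply MemLp.toLp_congr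
    exact Filter.Eventually.of_forall fun x => by simp
  rw [this]
  exact norm_add_le _ _

lemma swap_comp {a b c : Fin n} (hab : a ≠ b) (hac : a ≠ c) (hbc : b ≠ c) :
    (⇑(Equiv.swap a c)) ∘ (⇑(Equiv.swap b c)) ∘ (⇑(Equiv.swap a c)) = ⇑(Equiv.swap a b) := by
  funext x
  simp only [Function.comp_apply, Equiv.swap_apply_def]
  split_ifs <;> simp_all

theorem influence_triangle_aux (μ : Measure (Fin n → ℝ))
    [IsProbabilityMeasure μ] (hinv : ∀ π : Equiv.Perm (Fin n), Measure.map (fun x => x ∘ π) μ = μ)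
    (hint : ∀ P : MvPolynomial (Fin n) ℝ, Integrable (fun x => eval x P) μ)
    (f : MvPolynomial (Fin n) ℝ)
    (i j k : Fin n) (hij : i ≠ j) (hik : i ≠ k) (hjk : j ≠ k) :
    (1/2) * (∫ x, (eval x (MvPolynomial.rename (⇑(Equiv.swap i j)) f) - eval x f) ^ 2 ∂μ) ≤
      (9 / 2) * ((1/2) * (∫ x, (eval x (MvPolynomial.rename (⇑(Equiv.swap i k)) f) - eval x f) ^ 2 ∂μ)
        + (1/2) * (∫ x, (eval x (MvPolynomial.rename (⇑(Equiv.swap j k)) f) - eval x f) ^ 2 ∂μ)) := by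
  have hco : ∀ x : Fin n → ℝ, ∀ l m : Fin n,
      eval x (rename (⇑(Equiv.swap l m)) f) - eval x f
        = eval x (rename (⇑(Equiv.swap l m)) f - f) := fun x l m => by simp
  simp only [hco]
  have h1 : Real.sqrt (∫ x, (eval x (rename (⇑(Equiv.swap i j)) f - f))^2 ∂μ)
      ≤ 2 * Real.sqrt (∫ x, (eval x (rename (⇑(Equiv.swap i k)) f - f))^2 ∂μ)
        + Real.sqrt (∫ x, (eval x (rename (⇑(Equiv.swap j k)) f - f))^2 ∂μ) := by
    have hdec : rename (⇑(Equiv.swap i j)) f - f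
        = (rename (⇑(Equiv.swap i k)) (rename (⇑(Equiv.swap j k)) (rename (⇑(Equiv.swap i k)) f - f))
          + rename (⇑(Equiv.swap i k)) (rename (⇑(Equiv.swap j k)) f - f))
          + (rename (⇑(Equiv.swap i k)) f - f) := by
      simp only [map_sub, rename_rename]
      rw [swap_comp hij hik hjk]
      ring
    calc Real.sqrt (∫ x, (eval x (rename (⇑(Equiv.swap i j)) f - f))^2 ∂μ)
        ≤ Real.sqrt (∫ x, (eval x ((rename (⇑(Equiv.swap i k)) (rename (⇑(Equiv.swap j k)) (rename (⇑(Equiv.swap i k)) f - f))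
          + rename (⇑(Equiv.swap i k)) (rename (⇑(Equiv.swap j k)) f - f))))^2 ∂μ)
          + Real.sqrt (∫ x, (eval x (rename (⇑(Equiv.swap i k)) f - f))^2 ∂μ) := by
          rw [hdec]; exact sqrt_tri μ hint _ _
      _ ≤ (Real.sqrt (∫ x, (eval x (rename (⇑(Equiv.swap i k)) (rename (⇑(Equiv.swap j k)) (rename (⇑(Equiv.swap i k)) f - f))))^2 ∂μ)
          + Real.sqrt (∫ x, (eval x (rename (⇑(Equiv.swap i k)) (rename (⇑(Equiv.swap j k)) f - f)))^2 ∂μ))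
          + Real.sqrt (∫ x, (eval x (rename (⇑(Equiv.swap i k)) f - f))^2 ∂μ) :=
          add_le_add (sqrt_tri μ hint _ _) le_rfl
      _ = 2 * Real.sqrt (∫ x, (eval x (rename (⇑(Equiv.swap i k)) f - f))^2 ∂μ)
          + Real.sqrt (∫ x, (eval x (rename (⇑(Equiv.swap j k)) f - f))^2 ∂μ) := by
          rw [N_inv μ hinv _ (Equiv.swap i k), N_inv μ hinv _ (Equiv.swap j k),
            N_inv μ hinv _ (Equiv.swap i k)]
          ring
  have h2 : Real.sqrt (∫ x, (eval x (rename (⇑(Equiv.swap i j)) f - f))^2 ∂μ)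
      ≤ Real.sqrt (∫ x, (eval x (rename (⇑(Equiv.swap i k)) f - f))^2 ∂μ)
        + 2 * Real.sqrt (∫ x, (eval x (rename (⇑(Equiv.swap j k)) f - f))^2 ∂μ) := by
    have hdec : rename (⇑(Equiv.swap i j)) f - f
        = (rename (⇑(Equiv.swap j k)) (rename (⇑(Equiv.swap i k)) (rename (⇑(Equiv.swap j k)) f - f))
          + rename (⇑(Equiv.swap j k)) (rename (⇑(Equiv.swap i k)) f - f))
          + (rename (⇑(Equiv.swap j k)) f - f) := by
      simp only [map_sub, rename_rename]
      rw [(swap_comp hij.symm hjk hik).trans (by rw [Equiv.swap_comm])]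
      ring
    calc Real.sqrt (∫ x, (eval x (rename (⇑(Equiv.swap i j)) f - f))^2 ∂μ)
        ≤ Real.sqrt (∫ x, (eval x ((rename (⇑(Equiv.swap j k)) (rename (⇑(Equiv.swap i k)) (rename (⇑(Equiv.swap j k)) f - f))
          + rename (⇑(Equiv.swap j k)) (rename (⇑(Equiv.swap i k)) f - f))))^2 ∂μ)
          + Real.sqrt (∫ x, (eval x (rename (⇑(Equiv.swap j k)) f - f))^2 ∂μ) := by
          rw [hdec]; exact sqrt_tri μ hint _ _
      _ ≤ (Real.sqrt (∫ x, (eval x (rename (⇑(Equiv.swap j k)) (rename (⇑(Equiv.swap i k)) (rename (⇑(Equiv.swap j k)) f - f))))^2 ∂μ)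
          + Real.sqrt (∫ x, (eval x (rename (⇑(Equiv.swap j k)) (rename (⇑(Equiv.swap i k)) f - f)))^2 ∂μ))
          + Real.sqrt (∫ x, (eval x (rename (⇑(Equiv.swap j k)) f - f))^2 ∂μ) :=
          add_le_add (sqrt_tri μ hint _ _) le_rfl
      _ = Real.sqrt (∫ x, (eval x (rename (⇑(Equiv.swap i k)) f - f))^2 ∂μ)
          + 2 * Real.sqrt (∫ x, (eval x (rename (⇑(Equiv.swap j k)) f - f))^2 ∂μ) := by
          rw [N_inv μ hinv _ (Equiv.swap j k), N_inv μ hinv _ (Equiv.swap i k),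
            N_inv μ hinv _ (Equiv.swap j k)]
          ring
  have hA0 : 0 ≤ ∫ x, (eval x (rename (⇑(Equiv.swap i k)) f - f))^2 ∂μ :=
    integral_nonneg fun x => sq_nonneg _
  have hB0 : 0 ≤ ∫ x, (eval x (rename (⇑(Equiv.swap j k)) f - f))^2 ∂μ :=
    integral_nonneg fun x => sq_nonneg _
  have hC0 : 0 ≤ ∫ x, (eval x (rename (⇑(Equiv.swap i j)) f - f))^2 ∂μ :=
    integral_nonneg fun x => sq_nonneg _
  nlinarith [Real.sq_sqrt hA0, Real.sq_sqrt hB0, Real.sq_sqrt hC0,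
    Real.sqrt_nonneg (∫ x, (eval x (rename (⇑(Equiv.swap i k)) f - f))^2 ∂μ),
    Real.sqrt_nonneg (∫ x, (eval x (rename (⇑(Equiv.swap j k)) f - f))^2 ∂μ),
    Real.sqrt_nonneg (∫ x, (eval x (rename (⇑(Equiv.swap i j)) f - f))^2 ∂μ),
    mul_le_mul h1 h2 (Real.sqrt_nonneg _) (by positivity),
    sq_nonneg (Real.sqrt (∫ x, (eval x (rename (⇑(Equiv.swap i k)) f - f))^2 ∂μ)
      - Real.sqrt (∫ x, (eval x (rename (⇑(Equiv.swap j k)) f - f))^2 ∂μ))]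

/-- Triangle inequality for influences:
`Inf_{ij}[f] ≤ (9/2)(Inf_{ik}[f] + Inf_{jk}[f])`. -/
theorem influence_triangle {n : ℕ} (μ : Measure (Fin n → ℝ))
    [IsProbabilityMeasure μ] (hinv : PermInvariant μ)
    (hint : ∀ P : MvPolynomial (Fin n) ℝ, Integrable (fun x => eval x P) μ)
    (f : MvPolynomial (Fin n) ℝ) (hml : IsMultilinear f)
    (i j k : Fin n) (hij : i ≠ j) (hik : i ≠ k) (hjk : j ≠ k) :
    pairInf μ f i j ≤ (9 / 2) * (pairInf μ f i k + pairInf μ f j k) := by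
  simp only [pairInf]
  exact influence_triangle_aux μ hinv hint f i j k hij hik hjk
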